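/- arXiv:2311.01959 — 2 statements merged into one kernel-verified Lean document; each statement's English description precedes it below -/
import Mathlib

section
/- For every linear subspace W ⊆ ℝ^n, the circuit imbalance measure of W equals that of its orthogonal complement: κ(W) = κ(W^⊥). -/
noncomputable section

open Classical

/-- A nonzero `g ∈ W` is an elementary vector of `W` if no nonzero `h ∈ W`
has strictly smaller support. -/
def IsElementaryVec {n : ℕ} (W : Submodule ℝ (EuclideanSpace ℝ (Fin n)))
    (g : EuclideanSpace ℝ (Fin n)) : Prop :=
  g ∈ W ∧ g ≠ 0 ∧
    ∀ h : EuclideanSpace ℝ (Fin n), h ∈ W → h ≠ 0 →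
      ¬ ({i | h i ≠ 0} ⊂ {i | g i ≠ 0})

/-- The circuit imbalance measure `κ(W)`: the maximum of `|g j / g i|` over elementary
vectors `g` of `W` and `i, j ∈ supp(g)`, with `κ(W) := 1` for the trivial subspaces. -/
noncomputable def kappaSub {n : ℕ} (W : Submodule ℝ (EuclideanSpace ℝ (Fin n))) : ℝ :=
  if W = ⊥ ∨ W = ⊤ then 1
  else sSup {t : ℝ | ∃ g : EuclideanSpace ℝ (Fin n), IsElementaryVec W g ∧
    ∃ i j : Fin n, g i ≠ 0 ∧ g j ≠ 0 ∧ t = |g j / g i|}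

namespace KappaAux

/-- The set of imbalance values of `W`. -/
def S {n : ℕ} (W : Submodule ℝ (EuclideanSpace ℝ (Fin n))) : Set ℝ :=
  {t : ℝ | ∃ g : EuclideanSpace ℝ (Fin n), IsElementaryVec W g ∧
    ∃ i j : Fin n, g i ≠ 0 ∧ g j ≠ 0 ∧ t = |g j / g i|}

lemma exists_min_ncard {α β : Type*} (f : α → Set β) {T : Set α} (hT : T.Nonempty) :
    ∃ h ∈ T, ∀ u ∈ T, (f h).ncard ≤ (f u).ncard := by
  have hne : ((fun a => (f a).ncard) '' T).Nonempty := hT.image _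
  obtain ⟨h, hhT, hf⟩ := Nat.sInf_mem hne
  exact ⟨h, hhT, fun u hu => le_trans (le_of_eq hf) (Nat.sInf_le ⟨u, hu, rfl⟩)⟩

lemma exists_ne_zero {n : ℕ} {h : EuclideanSpace ℝ (Fin n)} (h0 : h ≠ 0) :
    ∃ k, h k ≠ 0 := by
  by_contra hc
  push_neg at hc
  exact h0 (PiLp.ext fun k => hc k)

/-- Main duality lemma: every imbalance value of `W` is an imbalance value of `Wᗮ`,
provided `W ≠ ⊤`. -/
lemma key {n : ℕ} (W : Submodule ℝ (EuclideanSpace ℝ (Fin n))) (hWtop : W ≠ ⊤)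
    {t : ℝ} (ht : t ∈ S W) : t ∈ S Wᗮ := by
  obtain ⟨g, ⟨hgW, hg0, hgmin⟩, i, j, hgi, hgj, rfl⟩ := ht
  by_cases hij : i = j
  · -- the value is `1`; any minimal-support vector of `Wᗮ` witnesses it
    subst hij
    have hWbot : Wᗮ ≠ ⊥ := fun h => hWtop (Submodule.orthogonal_eq_bot_iff.1 h)
    obtain ⟨v, hvW, hv0⟩ := Submodule.ne_bot_iff _ |>.1 hWbot
    have hTne : ({h : EuclideanSpace ℝ (Fin n) | h ∈ Wᗮ ∧ h ≠ 0}).Nonempty :=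
      ⟨v, hvW, hv0⟩
    obtain ⟨h, ⟨hhW, hh0⟩, hmin⟩ := exists_min_ncard (fun h => {k | h k ≠ 0}) hTne
    obtain ⟨k, hk⟩ := exists_ne_zero hh0
    refine ⟨h, ⟨hhW, hh0, ?_⟩, k, k, hk, hk, by rw [div_self hgi, div_self hk]⟩
    intro u huW hu0 hss
    have hlt : ({m | u m ≠ 0}).ncard < ({m | h m ≠ 0}).ncard :=
      Set.ncard_lt_ncard hss (Set.toFinite _)
    exact absurd (hmin u ⟨huW, hu0⟩) (not_le.2 hlt)
  · -- main case: `i ≠ j`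
    set C : Set (Fin n) := {k | g k ≠ 0} with hC
    set D : Set (Fin n) := C \ {i, j} with hD
    -- generic orthogonality computation
    have hsum : ∀ h : EuclideanSpace ℝ (Fin n), h ∈ Wᗮ → (∀ k ∈ D, h k = 0) →
        g i * h i + g j * h j = 0 := by
      intro h hhW hhD
      have hinner : (∑ k, g k * h k) = 0 := by
        have := Submodule.inner_right_of_mem_orthogonal hgW hhW
        simpa [PiLp.inner_apply, RCLike.inner_apply, starRingEnd_apply, mul_comm] using this
      have hsub : (∑ k ∈ ({i, j} : Finset (Fin n)), g k * h k) = ∑ k, g k * h k := by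
        refine Finset.sum_subset (Finset.subset_univ _) ?_
        intro k _ hk
        by_cases hgk : g k = 0
        · simp [hgk]
        · have hkD : k ∈ D := by
            refine ⟨hgk, ?_⟩
            simp only [Finset.mem_insert, Finset.mem_singleton] at hk
            push_neg at hk
            simp [hk.1, hk.2]
          rw [hhD k hkD, mul_zero]
      rw [← hsub, Finset.sum_pair hij] at hinner
      exact hinner
    -- Step 1: there is `h₀ ∈ Wᗮ` vanishing on `D` with `h₀ i ≠ 0`
    have hstep1 : ∃ h0 : EuclideanSpace ℝ (Fin n),
        h0 ∈ Wᗮ ∧ (∀ k ∈ D, h0 k = 0) ∧ h0 i ≠ 0 := by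
      by_contra hcon
      push_neg at hcon
      -- define the coordinate subspace Z
      let Z : Submodule ℝ (EuclideanSpace ℝ (Fin n)) :=
        { carrier := {x | ∀ k ∈ D, x k = 0}
          add_mem' := fun {a b} ha hb k hk => by
            show a k + b k = 0
            rw [ha k hk, hb k hk, add_zero]
          zero_mem' := fun k _ => rfl
          smul_mem' := fun c {x} hx k hk => by
            show c * x k = 0
            rw [hx k hk, mul_zero] }
      have hZmem : ∀ x : EuclideanSpace ℝ (Fin n), x ∈ Z ↔ ∀ k ∈ D, x k = 0 :=
        fun x => Iff.rfl
      have hsingle : EuclideanSpace.single i (1 : ℝ) ∈ (Wᗮ ⊓ Z)ᗮ := by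
        rw [Submodule.mem_orthogonal]
        intro u hu
        obtain ⟨huW, huZ⟩ := hu
        have hui : u i = 0 := hcon u huW (by exact huZ)
        rw [EuclideanSpace.inner_single_right]
        simp [hui]
      have hIZ : Wᗮ ⊓ Z = (W ⊔ Zᗮ)ᗮ := by
        conv_lhs => rw [← Z.orthogonal_orthogonal]
        exact Submodule.inf_orthogonal _ _
      rw [hIZ, Submodule.orthogonal_orthogonal] at hsingle
      obtain ⟨w, hw, z, hz, hwz⟩ := Submodule.mem_sup.1 hsingle
      -- z vanishes outside D
      have hzout : ∀ m, m ∉ D → z m = 0 := by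
        intro m hm
        have hmZ : EuclideanSpace.single m (1 : ℝ) ∈ Z := by
          intro k hk
          have : k ≠ m := fun h => hm (h ▸ hk)
          simp [EuclideanSpace.single_apply, this]
        have := (Submodule.mem_orthogonal Z z).1 hz _ hmZ
        rw [EuclideanSpace.inner_single_left] at this
        simpa using this
      have hiD : i ∉ D := fun h => h.2 (by simp)
      have hjD : j ∉ D := fun h => h.2 (by simp)
      have hweq : w = EuclideanSpace.single i (1 : ℝ) - z := by
        rw [← hwz]; abel
      have hwi : w i = 1 := by
        rw [hweq]
        show EuclideanSpace.single i (1 : ℝ) i - z i = 1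
        rw [hzout i hiD, EuclideanSpace.single_apply]
        simp
      have hw0 : w ≠ 0 := by
        intro h
        rw [h] at hwi
        simp at hwi
      have hwsupp : {m | w m ≠ 0} ⊆ C := by
        intro m hm
        by_contra hmC
        have hmD : m ∉ D := fun h => hmC h.1
        have hmi : m ≠ i := by
          rintro rfl
          exact hmC hgi
        apply hm
        rw [hweq]
        show EuclideanSpace.single i (1 : ℝ) m - z m = 0
        rw [hzout m hmD, EuclideanSpace.single_apply]
        simp [hmi]
      have hjw : j ∉ {m | w m ≠ 0} := by
        intro hjw
        apply hjw
        rw [hweq]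
        show EuclideanSpace.single i (1 : ℝ) j - z j = 0
        rw [hzout j hjD, EuclideanSpace.single_apply]
        simp [Ne.symm hij]
      have hss : {m | w m ≠ 0} ⊂ C :=
        lt_of_le_of_ne hwsupp (fun h => hjw (h ▸ hgj))
      exact hgmin w hw hw0 hss
    obtain ⟨h0, hh0W, hh0D, hh0i⟩ := hstep1
    -- the set T of candidates
    set T : Set (EuclideanSpace ℝ (Fin n)) :=
      {h | h ∈ Wᗮ ∧ (∀ k ∈ D, h k = 0) ∧ h i ≠ 0} with hT
    have hTne : T.Nonempty := ⟨h0, hh0W, hh0D, hh0i⟩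
    obtain ⟨h, ⟨hhW, hhD, hhi⟩, hmin⟩ := exists_min_ncard (fun h => {k | h k ≠ 0}) hTne
    have hh0' : h ≠ 0 := fun hh => hhi (by rw [hh]; rfl)
    have hsum_h := hsum h hhW hhD
    have hhj : h j ≠ 0 := by
      intro hhj
      rw [hhj, mul_zero, add_zero, mul_eq_zero] at hsum_h
      rcases hsum_h with h1 | h1
      · exact hgi h1
      · exact hhi h1
    -- h is elementary in Wᗮ
    have helem : IsElementaryVec Wᗮ h := by
      refine ⟨hhW, hh0', ?_⟩
      intro u huW hu0 hss
      have husub : {k | u k ≠ 0} ⊆ {k | h k ≠ 0} := hss.1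
      have huD : ∀ k ∈ D, u k = 0 := by
        intro k hk
        by_contra huk
        exact absurd (hhD k hk) (husub huk)
      have hsum_u := hsum u huW huD
      by_cases hui : u i = 0
      · have huj : u j = 0 := by
          rw [hui, mul_zero, zero_add, mul_eq_zero] at hsum_u
          rcases hsum_u with h1 | h1
          · exact absurd h1 hgj
          · exact h1
        obtain ⟨l, hl⟩ := exists_ne_zero hu0
        have hlh : h l ≠ 0 := husub hl
        set h' : EuclideanSpace ℝ (Fin n) := h - (h l / u l) • u with hh'
        have hh'W : h' ∈ Wᗮ := Submodule.sub_mem _ hhW (Submodule.smul_mem _ _ huW)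
        have happ : ∀ m, h' m = h m - (h l / u l) * u m := fun m => rfl
        have hh'i : h' i ≠ 0 := by
          rw [happ, hui, mul_zero, sub_zero]; exact hhi
        have hh'D : ∀ k ∈ D, h' k = 0 := by
          intro k hk
          rw [happ, hhD k hk, huD k hk, mul_zero, sub_zero]
        have hh'l : h' l = 0 := by
          rw [happ, div_mul_cancel₀ _ hl, sub_self]
        have hh'sub : {m | h' m ≠ 0} ⊂ {m | h m ≠ 0} := by
          refine lt_of_le_of_ne ?_ ?_
          · intro m hm
            by_contra hmh
            have hhm : h m = 0 := not_not.1 fun hc => hmh hc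
            have hum : u m = 0 := not_not.1 fun hc => hmh (husub hc)
            exact hm (by rw [happ, hhm, hum, mul_zero, sub_zero])
          · intro hEq
            have : l ∈ {m | h' m ≠ 0} := hEq ▸ hlh
            exact this hh'l
        have hlt : ({m | h' m ≠ 0}).ncard < ({m | h m ≠ 0}).ncard :=
          Set.ncard_lt_ncard hh'sub (Set.toFinite _)
        exact absurd (hmin h' ⟨hh'W, hh'D, hh'i⟩) (not_le.2 hlt)
      · have hlt : ({m | u m ≠ 0}).ncard < ({m | h m ≠ 0}).ncard :=
          Set.ncard_lt_ncard hss (Set.toFinite _)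
        exact absurd (hmin u ⟨huW, huD, hui⟩) (not_le.2 hlt)
    -- conclude: |g j / g i| = |h i / h j|
    refine ⟨h, helem, j, i, hhj, hhi, ?_⟩
    rw [abs_div, abs_div, div_eq_div_iff (abs_ne_zero.2 hgi) (abs_ne_zero.2 hhj),
      ← abs_mul, ← abs_mul]
    rw [show g j * h j = -(g i * h i) by linarith, abs_neg]
    ring_nf

end KappaAux

/-- For every linear subspace `W ⊆ ℝ^n`, `κ(W) = κ(W^⊥)`. -/
theorem kappa_orthogonal_complement {n : ℕ} (W : Submodule ℝ (EuclideanSpace ℝ (Fin n))) :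
    kappaSub W = kappaSub Wᗮ := by
  by_cases hb : W = ⊥
  · subst hb
    rw [Submodule.bot_orthogonal_eq_top]
    unfold kappaSub
    rw [if_pos (Or.inl rfl), if_pos (Or.inr rfl)]
  by_cases htop : W = ⊤
  · subst htop
    rw [Submodule.top_orthogonal_eq_bot]
    unfold kappaSub
    rw [if_pos (Or.inr rfl), if_pos (Or.inl rfl)]
  · have h1 : ¬(W = ⊥ ∨ W = ⊤) := by
      rintro (h | h)
      exacts [hb h, htop h]
    have h2 : ¬(Wᗮ = ⊥ ∨ Wᗮ = ⊤) := by
      rintro (h | h)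
      · exact htop (Submodule.orthogonal_eq_bot_iff.1 h)
      · exact hb ((Submodule.orthogonal_eq_top_iff _).1 h)
    unfold kappaSub
    rw [if_neg h1, if_neg h2]
    congr 1
    apply Set.Subset.antisymm
    · exact fun t ht => KappaAux.key W htop ht
    · intro t ht
      have hWperp : Wᗮ ≠ ⊤ := fun h => hb ((Submodule.orthogonal_eq_top_iff _).1 h)
      have := KappaAux.key Wᗮ hWperp ht
      rwa [W.orthogonal_orthogonal] at this
end
end

section
/- Let f : ℝ^n → ℝ be a continuously differentiable convex function whose domain contains the box [0,u] (u ≥ 0), and let M ≥ 1 be such that for every index i ∈ [n] and every pair x, y ∈ ℝ^n with x_j = y_j for all j ≠ i, one has |∇_i f(x) − ∇_i f(y)| ≤ M·|x_i − y_i|. Let η > 0 and suppose x ∈ [0,u] satisfies f(x) ≤ min{f(z) : z ∈ [0,u]} + η. Then for every i ∈ [n]: (i) if ∇_i f(x) ≥ 2M√η then x_i ≤ √η/M, and (ii) if ∇_i f(x) ≤ −2M√η then x_i ≥ u_i − √η/M. -/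
open BigOperators

lemma key_aux {n : ℕ} (f : (Fin n → ℝ) → ℝ) (hfd : Differentiable ℝ f)
    (hconv : ConvexOn ℝ Set.univ f) (M η : ℝ) (hM : 1 ≤ M) (hη : 0 < η)
    (x v : Fin n → ℝ)
    (hL : ∀ a b : ℝ, |fderiv ℝ f (x + a • v) v - fderiv ℝ f (x + b • v) v| ≤ M * |a - b|)
    (hd : 2 * M * Real.sqrt η ≤ fderiv ℝ f x v)
    (c : ℝ) (hc : Real.sqrt η / M < c)
    (hmin : ∀ t : ℝ, 0 ≤ t → t ≤ c → f x ≤ f (x + (-t) • v) + η) : False := by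
  set r := Real.sqrt η with hr
  have hr0 : 0 < r := Real.sqrt_pos.mpr hη
  have hrr : r * r = η := Real.mul_self_sqrt hη.le
  have hM0 : (0:ℝ) < M := lt_of_lt_of_le one_pos hM
  set g : ℝ → ℝ := fun t => f (x + t • v) with hg
  have hgd : ∀ t : ℝ, HasDerivAt g (fderiv ℝ f (x + t • v) v) t := by
    intro t
    have h1 : HasDerivAt (fun t : ℝ => x + t • v) v t := by
      simpa using ((hasDerivAt_id t).smul_const v).const_add x
    exact ((hfd (x + t • v)).hasFDerivAt).comp_hasDerivAt t h1
  have hderiv : ∀ t, deriv g t = fderiv ℝ f (x + t • v) v := fun t => (hgd t).deriv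
  have hgdiff : ∀ t, DifferentiableAt ℝ g t := fun t => (hgd t).differentiableAt
  have hgconv : ConvexOn ℝ Set.univ g := by
    refine ⟨convex_univ, fun a _ b _ p q hp hq hpq => ?_⟩
    have h2 := hconv.2 (Set.mem_univ (x + a • v)) (Set.mem_univ (x + b • v)) hp hq hpq
    have h3 : x + (p * a + q * b) • v = p • (x + a • v) + q • (x + b • v) := by
      have h4 : p • (x + a • v) + q • (x + b • v) = (p + q) • x + (p * a + q * b) • v := by
        module
      rw [hpq, one_smul] at h4
      exact h4.symm
    simp only [hg, smul_eq_mul]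
    rw [h3]
    simpa [smul_eq_mul] using h2
  have hd0 : deriv g 0 = fderiv ℝ f x v := by rw [hderiv]; norm_num
  have hlb : ∀ a : ℝ, 2 * M * r - M * |a| ≤ deriv g a := by
    intro a
    have h1 := hL a 0
    rw [← hderiv, ← hderiv] at h1
    have h2 := (abs_le.mp h1).1
    rw [hd0] at h2
    simp only [sub_zero] at h2
    linarith
  set s := min c ((4/3) * r) with hs
  have hs0 : 0 < s := lt_min (lt_trans (div_pos hr0 hM0) hc) (by positivity)
  have hsr : r / M < s := lt_min hc (lt_of_le_of_lt (div_le_self hr0.le hM) (by linarith))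
  have hsc : s ≤ c := min_le_left _ _
  have hs43 : s ≤ (4/3) * r := min_le_right _ _
  -- gradient inequality
  have key2 : ∀ a b : ℝ, a < b → (b - a) * deriv g a ≤ g b - g a := by
    intro a b hab
    have h1 := hgconv.deriv_le_slope (Set.mem_univ a) (Set.mem_univ b) hab (hgdiff a)
    rw [slope_def_field] at h1
    rw [mul_comm]
    exact (le_div_iff₀ (by linarith)).mp h1
  have D1 := key2 (-(s/2)) 0 (by linarith)
  have D2 := key2 (-s) (-(s/2)) (by linarith)
  have L1 := hlb (-(s/2))
  have L2 := hlb (-s)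
  rw [abs_neg, abs_of_pos (by linarith : (0:ℝ) < s/2)] at L1
  rw [abs_neg, abs_of_pos hs0] at L2
  -- total decrease
  have hD : M * s * r ≤ g 0 - g (-s) := by nlinarith [mul_pos hM0 hs0]
  have hη' : η < M * s * r := by
    have : M * (r / M) < M * s := by exact (mul_lt_mul_iff_right₀ hM0).mpr hsr
    rw [mul_div_cancel₀ _ (ne_of_gt hM0)] at this
    nlinarith
  have hm := hmin s hs0.le hsc
  have hg0 : g 0 = f x := by simp [hg]
  have hgs : g (-s) = f (x + (-s) • v) := rfl
  rw [← hg0, ← hgs] at hm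
  linarith

set_option maxHeartbeats 1000000 in
/-- Let `f : ℝ^n → ℝ` be continuously differentiable and convex, and let
`M ≥ 1` be a coordinatewise smoothness constant: whenever `x, y` differ only in
coordinate `i`, `|∇_i f(x) − ∇_i f(y)| ≤ M|x_i − y_i|`. If `η > 0` and `x ∈ [0,u]` is an
`η`-approximate minimizer of `f` over `[0,u]`, then for every `i`:
(i) `∇_i f(x) ≥ 2M√η → x_i ≤ √η/M`, and (ii) `∇_i f(x) ≤ −2M√η → x_i ≥ u_i − √η/M`. -/
theorem approx_minimizer_coordinate_bounds {n : ℕ} (f : (Fin n → ℝ) → ℝ)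
    (hf : ContDiff ℝ 1 f) (hconv : ConvexOn ℝ Set.univ f)
    (u : Fin n → ℝ) (hu : 0 ≤ u) (M : ℝ) (hM : 1 ≤ M)
    (hsmooth : ∀ (i : Fin n) (x y : Fin n → ℝ), (∀ j, j ≠ i → x j = y j) →
      |fderiv ℝ f x (Pi.single i 1) - fderiv ℝ f y (Pi.single i 1)| ≤ M * |x i - y i|)
    (η : ℝ) (hη : 0 < η) (x : Fin n → ℝ) (hx0 : 0 ≤ x) (hxu : x ≤ u)
    (hxmin : ∀ z : Fin n → ℝ, 0 ≤ z → z ≤ u → f x ≤ f z + η) :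
    ∀ i : Fin n,
      (fderiv ℝ f x (Pi.single i 1) ≥ 2 * M * Real.sqrt η → x i ≤ Real.sqrt η / M) ∧
      (fderiv ℝ f x (Pi.single i 1) ≤ -(2 * M * Real.sqrt η) →
        x i ≥ u i - Real.sqrt η / M) := by
  intro i
  have hfd : Differentiable ℝ f := hf.differentiable one_ne_zero
  constructor
  · intro hgrad
    by_contra hxi
    push_neg at hxi
    refine key_aux f hfd hconv M η hM hη x ((Pi.single i 1 : Fin n → ℝ)) ?_ hgrad (x i) hxi ?_
    · intro a b
      have hagree : ∀ j, j ≠ i →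
          (x + a • (Pi.single i 1 : Fin n → ℝ)) j = (x + b • (Pi.single i 1 : Fin n → ℝ)) j := by
        intro j hj
        simp [Pi.single_eq_of_ne hj]
      have h1 := hsmooth i _ _ hagree
      simpa [Pi.single_eq_same] using h1
    · intro t ht0 htc
      apply hxmin
      · intro j
        by_cases hj : j = i
        · subst hj
          simp only [Pi.add_apply, Pi.smul_apply, Pi.single_eq_same, smul_eq_mul,
            mul_one, Pi.zero_apply, neg_mul]
          linarith
        · simp [Pi.single_eq_of_ne hj]
          exact hx0 j
      · intro j
        by_cases hj : j = i
        · subst hj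
          simp only [Pi.add_apply, Pi.smul_apply, Pi.single_eq_same, smul_eq_mul,
            mul_one, neg_mul]
          have h5 := hxu j
          linarith
        · simp [Pi.single_eq_of_ne hj]
          exact hxu j
  · intro hgrad
    by_contra hxi
    push_neg at hxi
    have hxi' : Real.sqrt η / M < u i - x i := by linarith
    have hdneg : 2 * M * Real.sqrt η ≤ fderiv ℝ f x (-((Pi.single i 1 : Fin n → ℝ))) := by
      rw [map_neg]
      linarith
    refine key_aux f hfd hconv M η hM hη x (-((Pi.single i 1 : Fin n → ℝ))) ?_ hdneg (u i - x i) hxi' ?_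
    · intro a b
      have hagree : ∀ j, j ≠ i →
          (x + a • -((Pi.single i 1 : Fin n → ℝ))) j = (x + b • -((Pi.single i 1 : Fin n → ℝ))) j := by
        intro j hj
        simp [Pi.single_eq_of_ne hj]
      have h1 := hsmooth i _ _ hagree
      have h2 : |fderiv ℝ f (x + a • -((Pi.single i 1 : Fin n → ℝ))) (-((Pi.single i 1 : Fin n → ℝ))) -
          fderiv ℝ f (x + b • -((Pi.single i 1 : Fin n → ℝ))) (-((Pi.single i 1 : Fin n → ℝ)))|
          = |fderiv ℝ f (x + a • -((Pi.single i 1 : Fin n → ℝ))) ((Pi.single i 1 : Fin n → ℝ)) -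
          fderiv ℝ f (x + b • -((Pi.single i 1 : Fin n → ℝ))) ((Pi.single i 1 : Fin n → ℝ))| := by
        rw [map_neg, map_neg]
        rw [← abs_neg]
        ring_nf
      rw [h2]
      calc _ ≤ M * |(x + a • -((Pi.single i 1 : Fin n → ℝ))) i - (x + b • -((Pi.single i 1 : Fin n → ℝ))) i| := h1
        _ = M * |a - b| := by
            simp only [Pi.add_apply, Pi.smul_apply, Pi.neg_apply, Pi.single_eq_same,
              smul_eq_mul, mul_neg, mul_one]
            rw [show x i + -a - (x i + -b) = -(a - b) by ring, abs_neg]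
    · intro t ht0 htc
      have hz : x + (-t) • -((Pi.single i 1 : Fin n → ℝ)) = x + t • (Pi.single i 1 : Fin n → ℝ) := by
        simp
      rw [hz]
      apply hxmin
      · intro j
        by_cases hj : j = i
        · subst hj
          simp only [Pi.add_apply, Pi.smul_apply, Pi.single_eq_same, smul_eq_mul,
            mul_one, Pi.zero_apply]
          have h5 := hx0 j
          simp only [Pi.zero_apply] at h5
          linarith
        · simp [Pi.single_eq_of_ne hj]
          exact hx0 j
      · intro j
        by_cases hj : j = i
        · subst hj
          simp only [Pi.add_apply, Pi.smul_apply, Pi.single_eq_same, smul_eq_mul, mul_one]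
          linarith
        · simp [Pi.single_eq_of_ne hj]
          exact hxu j
end
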